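/- Fix an integer d ≥ 2. Let X_d be the fundamental graph whose vertices are the pairs (S,T) of subsets of {1,…,d} with |S| = |T| ≤ d/2 and such that 1 ∈ S whenever |S| = d/2, with distinct vertices (S₁,T₁) and (S₂,T₂) adjacent iff |S₁ ∩ S₂| = |T₁ ∩ T₂|. Define index strings I₁,…,I_d and J₁,…,J_d on the vertex set of X_d by I_j((S,T)) = 1 iff j ∈ S and J_j((S,T)) = 1 iff j ∈ T. Then the distinguished generator f_d = ∏_{j=1}^{d} p_{I_j} − ∏_{j=1}^{d} p_{J_j} lies in the toric ideal I_{X_d}. -/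

import Mathlib

open MvPolynomial Finset

namespace BinaryGraphModels

variable {V : Type} [Fintype V] [DecidableEq V]

/-- The monomial map `φ_G` of the binary graph model: the variable `p_I` is sent to the
product over edges `{j,k}` of the variable `t^{jk}_{I(j)I(k)}` (encoded as the unordered pair
`{(j, I j), (k, I k)}`) times the product over isolated vertices `l` of `t^{l}_{I(l)}`. -/
noncomputable def phi (G : SimpleGraph V) :
    MvPolynomial (V → Bool) ℂ →ₐ[ℂ] MvPolynomial (Sym2 (V × Bool) ⊕ (V × Bool)) ℂ := by
  letI : DecidableRel G.Adj := Classical.decRel _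
  exact aeval fun I : V → Bool =>
    (∏ e ∈ G.edgeFinset,
      (X (Sum.inl (Sym2.map (fun v => (v, I v)) e)) :
        MvPolynomial (Sym2 (V × Bool) ⊕ (V × Bool)) ℂ)) *
    ∏ l ∈ univ.filter (fun l : V => ∀ k, ¬ G.Adj l k), X (Sum.inr (l, I l))

/-- The toric ideal `I_G` of the binary graph model of `G`. -/
noncomputable def toricIdeal (G : SimpleGraph V) : Ideal (MvPolynomial (V → Bool) ℂ) :=
  RingHom.ker (phi G).toRingHom

/-- `I_G` is generated in degree at most `d`. -/
def GenInDegLE (G : SimpleGraph V) (d : ℕ) : Prop :=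
  toricIdeal G =
    Ideal.span {f : MvPolynomial (V → Bool) ℂ | f ∈ toricIdeal G ∧ f.totalDegree ≤ d}

/-- The Markov width `μ(G)`: the least `d` such that `I_G` is generated in degree `≤ d`. -/
noncomputable def markovWidth (G : SimpleGraph V) : ℕ :=
  sInf {d : ℕ | GenInDegLE G d}

/-- `f` is a minimal generator of `I_G`, i.e. `f ∈ I_G` and `f ∉ 𝔪 · I_G` where `𝔪` is the
irrelevant maximal ideal generated by all the variables. -/
def IsMinimalGenerator (G : SimpleGraph V) (f : MvPolynomial (V → Bool) ℂ) : Prop :=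
  f ∈ toricIdeal G ∧
    f ∉ Ideal.span (Set.range (X : (V → Bool) → MvPolynomial (V → Bool) ℂ)) * toricIdeal G

/-- Two integer tables have the same `G`-marginals: equal two-way marginals along every edge
and equal one-way marginals at every isolated vertex. -/
def MarginalsEq (G : SimpleGraph V) (v₁ v₂ : (V → Bool) → ℤ) : Prop :=
  (∀ j k : V, G.Adj j k → ∀ a b : Bool,
    (∑ I : V → Bool, if I j = a ∧ I k = b then v₁ I else 0) =
    (∑ I : V → Bool, if I j = a ∧ I k = b then v₂ I else 0)) ∧
  (∀ l : V, (∀ k, ¬ G.Adj l k) → ∀ a : Bool,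
    (∑ I : V → Bool, if I l = a then v₁ I else 0) =
    (∑ I : V → Bool, if I l = a then v₂ I else 0))

/-- `B` is a Markov basis for `G`: any two nonnegative tables with the same `G`-marginals are
connected by a path of moves from `±B` staying nonnegative. -/
def IsMarkovBasis (G : SimpleGraph V) (B : Finset ((V → Bool) → ℤ)) : Prop :=
  ∀ v₁ v₂ : (V → Bool) → ℤ, (∀ I, 0 ≤ v₁ I) → (∀ I, 0 ≤ v₂ I) →
    MarginalsEq G v₁ v₂ →
    ∃ L : List ((V → Bool) → ℤ),
      (∀ u ∈ L, u ∈ B ∨ -u ∈ B) ∧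
      v₁ + L.sum = v₂ ∧
      ∀ n : ℕ, n ≤ L.length → ∀ I, 0 ≤ (v₁ + (L.take n).sum) I

/-- The binomial `p^{u⁺} - p^{u⁻}` associated to an integer table `u`. -/
noncomputable def moveBinomial (u : (V → Bool) → ℤ) : MvPolynomial (V → Bool) ℂ :=
  (∏ I : V → Bool, X I ^ (u I).toNat) - ∏ I : V → Bool, X I ^ (-u I).toNat

end BinaryGraphModels

namespace BinaryGraphModels

/-- Vertices of the fundamental graph `X_d`: pairs `(S, T)` of subsets of `{1, …, d}`
(here `Fin d`, with the distinguished element `1` rendered as `0 : Fin d`, i.e. the natural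
number `0` among the values of `Fin.val`) with `|S| = |T| ≤ d/2`, and `1 ∈ S` if `|S| = d/2`. -/
abbrev FundamentalVertex (d : ℕ) : Type :=
  {p : Finset (Fin d) × Finset (Fin d) //
    p.1.card = p.2.card ∧ 2 * p.1.card ≤ d ∧
      (2 * p.1.card = d → 0 ∈ p.1.image Fin.val)}

/-- The fundamental graph `X_d`: distinct vertices `(S₁, T₁)` and `(S₂, T₂)` are adjacent iff
`|S₁ ∩ S₂| = |T₁ ∩ T₂|`. -/
def fundamentalGraph (d : ℕ) : SimpleGraph (FundamentalVertex d) where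
  Adj p q := p ≠ q ∧ (p.val.1 ∩ q.val.1).card = (p.val.2 ∩ q.val.2).card
  symm := ⟨by
    rintro p q ⟨hne, h⟩
    refine ⟨hne.symm, ?_⟩
    rw [Finset.inter_comm q.val.1, Finset.inter_comm q.val.2]
    exact h⟩
  loopless := ⟨fun p h => h.1 rfl⟩

lemma prod_fiber_congr {α β M : Type*} [Fintype α] [Fintype β] [DecidableEq β] [CommMonoid M]
    (g₁ g₂ : α → β) (F : β → M)
    (h : ∀ b, (univ.filter fun a => g₁ a = b).card = (univ.filter fun a => g₂ a = b).card) :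
    ∏ a, F (g₁ a) = ∏ a, F (g₂ a) := by
  have e : ∀ g : α → β,
      ∏ a, F (g a) = ∏ b : β, F b ^ (univ.filter fun a => g a = b).card := by
    intro g
    rw [← Finset.prod_fiberwise' univ g F]
    exact Finset.prod_congr rfl fun b _ => Finset.prod_const _
  rw [e g₁, e g₂]
  exact Finset.prod_congr rfl fun b _ => by rw [h b]

lemma card_fiber_single {n : ℕ} (A C : Finset (Fin n)) (h : A.card = C.card) (b : Bool) :
    (univ.filter fun j => decide (j ∈ A) = b).card =
      (univ.filter fun j => decide (j ∈ C) = b).card := by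
  have key : ∀ S : Finset (Fin n),
      (univ.filter fun j => decide (j ∈ S) = b).card =
        if b then S.card else n - S.card := by
    intro S
    cases b
    · have : (univ.filter fun j => decide (j ∈ S) = false) = Sᶜ := by
        ext j; simp
      rw [this, Finset.card_compl, Fintype.card_fin]; rfl
    · have : (univ.filter fun j => decide (j ∈ S) = true) = S := by
        ext j; simp
      rw [this]; rfl
  rw [key A, key C, h]

lemma card_fiber_pair {n : ℕ} (A B C D : Finset (Fin n))
    (h1 : A.card = C.card) (h2 : B.card = D.card)
    (h : (A ∩ B).card = (C ∩ D).card) (y : Bool × Bool) :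
    (univ.filter fun j => ((decide (j ∈ A), decide (j ∈ B)) : Bool × Bool) = y).card =
      (univ.filter fun j => ((decide (j ∈ C), decide (j ∈ D)) : Bool × Bool) = y).card := by
  have key : ∀ S T : Finset (Fin n),
      (univ.filter fun j => ((decide (j ∈ S), decide (j ∈ T)) : Bool × Bool) = y).card =
        match y with
        | (true, true) => (S ∩ T).card
        | (true, false) => S.card - (S ∩ T).card
        | (false, true) => T.card - (S ∩ T).card
        | (false, false) => n - (S.card + T.card - (S ∩ T).card) := by
    intro S T
    obtain ⟨a, b⟩ := y
    have hST : (S ∩ T).card + (S ∪ T).card = S.card + T.card :=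
      Finset.card_inter_add_card_union S T
    have hS : (S ∩ T).card ≤ S.card := Finset.card_le_card Finset.inter_subset_left
    have hT : (S ∩ T).card ≤ T.card := Finset.card_le_card Finset.inter_subset_right
    cases a <;> cases b
    · have : (univ.filter fun j =>
          ((decide (j ∈ S), decide (j ∈ T)) : Bool × Bool) = (false, false)) = (S ∪ T)ᶜ := by
        ext j; simp [not_or]
      rw [this, Finset.card_compl, Fintype.card_fin]
      simp only []
      omega
    · have : (univ.filter fun j =>
          ((decide (j ∈ S), decide (j ∈ T)) : Bool × Bool) = (false, true)) = T \ S := by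
        ext j; simp [and_comm]
      rw [this]
      have := Finset.card_sdiff_add_card_inter T S
      rw [Finset.inter_comm] at this
      simp only []
      omega
    · have : (univ.filter fun j =>
          ((decide (j ∈ S), decide (j ∈ T)) : Bool × Bool) = (true, false)) = S \ T := by
        ext j; simp
      rw [this]
      have := Finset.card_sdiff_add_card_inter S T
      simp only []
      omega
    · have : (univ.filter fun j =>
          ((decide (j ∈ S), decide (j ∈ T)) : Bool × Bool) = (true, true)) = S ∩ T := by
        ext j; simp
      rw [this]
  rw [key A B, key C D]
  obtain ⟨a, b⟩ := y
  cases a <;> cases b <;> simp only [] <;> omega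

/-- the distinguished generator `f_d = ∏_j p_{I_j} - ∏_j p_{J_j}`, where
`I_j((S,T)) = 1` iff `j ∈ S` and `J_j((S,T)) = 1` iff `j ∈ T`, lies in the toric ideal of the
fundamental graph `X_d`. -/
theorem distinguishedGenerator_mem (d : ℕ) (hd : 2 ≤ d) :
    ((∏ j : Fin d, X (fun p : FundamentalVertex d => decide (j ∈ p.val.1))) -
        (∏ j : Fin d, X (fun p : FundamentalVertex d => decide (j ∈ p.val.2))) :
        MvPolynomial (FundamentalVertex d → Bool) ℂ) ∈
      toricIdeal (fundamentalGraph d) := by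
  classical
  rw [toricIdeal, RingHom.mem_ker]
  simp only [AlgHom.toRingHom_eq_coe, RingHom.coe_coe, map_sub, map_prod, phi, aeval_X]
  rw [sub_eq_zero, Finset.prod_mul_distrib, Finset.prod_mul_distrib]
  refine congrArg₂ (· * ·) ?_ ?_
  · refine Finset.prod_comm.trans (Eq.trans ?_ Finset.prod_comm)
    refine Finset.prod_congr rfl fun e he => ?_
    revert he
    refine Sym2.inductionOn e fun p q he => ?_
    have hadj : (fundamentalGraph d).Adj p q := by
      rwa [SimpleGraph.mem_edgeFinset, SimpleGraph.mem_edgeSet] at he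
    obtain ⟨hne, hcard⟩ := hadj
    simp only [Sym2.map_pair_eq]
    exact prod_fiber_congr
      (fun j : Fin d => ((decide (j ∈ p.val.1), decide (j ∈ q.val.1)) : Bool × Bool))
      (fun j : Fin d => ((decide (j ∈ p.val.2), decide (j ∈ q.val.2)) : Bool × Bool))
      (fun y => X (Sum.inl s((p, y.1), (q, y.2))))
      (card_fiber_pair _ _ _ _ p.prop.1 q.prop.1 hcard)
  · refine Finset.prod_comm.trans (Eq.trans ?_ Finset.prod_comm)
    refine Finset.prod_congr rfl fun l _ => ?_
    exact prod_fiber_congr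
      (fun j : Fin d => decide (j ∈ l.val.1))
      (fun j : Fin d => decide (j ∈ l.val.2))
      (fun b => X (Sum.inr (l, b)))
      (card_fiber_single _ _ l.prop.1)

end BinaryGraphModels
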